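/- Let U be a finite set with |U| = n, let F be a finite family of subsets of U, and let M and k be positive integers. Let G be the graph whose vertex set is the disjoint union of F and U × {1,…,M}, whose edges are: all pairs of distinct members of F, together with the pair {F, (u,i)} for every F ∈ F, u ∈ U, and i ∈ {1,…,M} such that u ∈ F. If there exists a subfamily F' ⊆ F with |F'| = k whose union equals U, then the set S of vertices of G corresponding to the members of F' satisfies: |S| = k, the induced subgraph G[S] is connected, and the closed neighborhood N_G[S] has size at least M·n. -/

import Mathlib

/-- The gadget graph for the coverage reduction: a clique on the family `𝓕`, plus `M`
copies of each universe element, where the vertex of a set `A ∈ 𝓕` is adjacent to the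
copies `(u, i)` of exactly the elements `u ∈ A`. -/
def coverGraph {U : Type*} (𝓕 : Finset (Finset U)) (M : ℕ) :
    SimpleGraph ({A // A ∈ 𝓕} ⊕ (U × Fin M)) :=
  SimpleGraph.fromRel (fun x y =>
    match x, y with
    | Sum.inl _, Sum.inl _ => True
    | Sum.inl A, Sum.inr p => p.1 ∈ A.1
    | _, _ => False)

/-- Completeness of the coverage reduction: a `k`-subfamily covering all of `U` yields a
connected `k`-set dominating at least `M·n` vertices of the gadget graph. -/
theorem stmt_11 {U : Type*} [Fintype U] [DecidableEq U]
    (𝓕 : Finset (Finset U)) (M k : ℕ) (hM : 0 < M) (hk : 0 < k)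
    (F' : Finset (Finset U)) (hsub : F' ⊆ 𝓕) (hcard : F'.card = k)
    (hcover : ∀ u : U, ∃ A ∈ F', u ∈ A) :
    ∀ S : Finset ({A // A ∈ 𝓕} ⊕ (U × Fin M)),
      S = F'.attach.image (fun A =>
        (Sum.inl ⟨A.1, hsub A.2⟩ : {A // A ∈ 𝓕} ⊕ (U × Fin M))) →
      S.card = k ∧
      ((coverGraph 𝓕 M).induce (S : Set ({A // A ∈ 𝓕} ⊕ (U × Fin M)))).Connected ∧
      M * Fintype.card U ≤
        {w : {A // A ∈ 𝓕} ⊕ (U × Fin M) |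
          w ∈ S ∨ ∃ v ∈ S, (coverGraph 𝓕 M).Adj v w}.ncard := by
  intro S hS
  have hmem : ∀ v, v ∈ S ↔ ∃ A : Finset U, ∃ h : A ∈ F', v = Sum.inl ⟨A, hsub h⟩ := by
    intro v
    subst hS
    constructor
    · intro hv
      obtain ⟨a, _, ha⟩ := Finset.mem_image.1 hv
      exact ⟨a.1, a.2, ha.symm⟩
    · rintro ⟨A, hA, rfl⟩
      exact Finset.mem_image.2 ⟨⟨A, hA⟩, Finset.mem_attach _ _, rfl⟩
  refine ⟨?_, ?_, ?_⟩
  · subst hS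
    rw [Finset.card_image_of_injective _ (fun a b hab => by
      have h := Sum.inl_injective hab; have h2 : a.1 = b.1 := Subtype.mk.inj h; exact Subtype.ext h2), Finset.card_attach, hcard]
  · rw [SimpleGraph.connected_iff]
    refine ⟨?_, ?_⟩
    · rintro ⟨a, ha⟩ ⟨b, hb⟩
      rcases (hmem a).1 ha with ⟨A, hA, rfl⟩
      rcases (hmem b).1 hb with ⟨B, hB, rfl⟩
      by_cases hab : A = B
      · subst hab
        exact SimpleGraph.Reachable.refl _
      · apply SimpleGraph.Adj.reachable
        show (coverGraph 𝓕 M).Adj _ _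
        refine ⟨?_, Or.inl trivial⟩
        simp [Subtype.ext_iff, hab]
    · obtain ⟨A, hA⟩ := Finset.card_pos.mp (hcard ▸ hk)
      exact ⟨⟨Sum.inl ⟨A, hsub hA⟩, (hmem _).2 ⟨A, hA, rfl⟩⟩⟩
  · have hsubset : Set.range (Sum.inr : U × Fin M → {A // A ∈ 𝓕} ⊕ (U × Fin M)) ⊆
        {w | w ∈ S ∨ ∃ v ∈ S, (coverGraph 𝓕 M).Adj v w} := by
      rintro _ ⟨⟨u, i⟩, rfl⟩
      obtain ⟨A, hA, hu⟩ := hcover u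
      refine Or.inr ⟨Sum.inl ⟨A, hsub hA⟩, (hmem _).2 ⟨A, hA, rfl⟩, ?_⟩
      simp [coverGraph, SimpleGraph.fromRel_adj, hu]
    have h1 : (Set.range (Sum.inr : U × Fin M → {A // A ∈ 𝓕} ⊕ (U × Fin M))).ncard =
        M * Fintype.card U := by
      rw [← Set.image_univ, Set.ncard_image_of_injective _ Sum.inr_injective,
        Set.ncard_univ, Nat.card_eq_fintype_card, Fintype.card_prod, Fintype.card_fin,
        Nat.mul_comm]
    calc M * Fintype.card U = _ := h1.symm
      _ ≤ _ := Set.ncard_le_ncard hsubset (Set.toFinite _)
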